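/- Let σ_i be a strategy satisfying Frictionality (there exists z_i ∈ A_i such that for every t, every h t-consistent with σ_i for i, and every s > t, {q ∈ [t,s] : h_i(q) ≠ z_i} is finite). Then σ_i satisfies Initial Uniqueness: for any t with T_{>t} ≠ ∅ and any h, g agreeing on T_{<t} and both t-consistent with σ_i for i, there exists s > t such that h_i = g_i on [t,s). -/

import Mathlib

open Set

/-- `S` is preconnected in the order topology on `α`. -/
def OTconn {α : Type*} [LinearOrder α] (S : Set α) : Prop :=
  @IsPreconnected α (Preorder.topology α) S

/-- Maximal order-connected sets on which `h` is constant. -/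
def blocks {α β : Type*} [LinearOrder α] (h : α → β) : Set (Set α) :=
  {S | S.Nonempty ∧ OTconn S ∧
    ∀ R : Set α, OTconn R → S ⊆ R → (R = S ↔ ∃ a, ∀ x ∈ R, h x = a)}

/-- Interval order on sets: `S ⊑ R` iff every element of `S` is strictly below
every element of `R`, or `S = R`. -/
def blw {α : Type*} [LT α] (S R : Set α) : Prop :=
  (∀ s ∈ S, ∀ r ∈ R, s < r) ∨ S = R

/-- A family of sets is well-ordered by the interval order: it is totally ordered
and every nonempty subfamily has a minimum. -/
def WOFam {α : Type*} [LT α] (π : Set (Set α)) : Prop :=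
  (∀ S ∈ π, ∀ R ∈ π, blw S R ∨ blw R S) ∧
  ∀ ρ : Set (Set α), ρ ⊆ π → ρ.Nonempty → ∃ S ∈ ρ, ∀ R ∈ ρ, blw S R

/-- `π` is a partition of `U`: nonempty pairwise-disjoint sets covering `U`. -/
def PartOn {α : Type*} (U : Set α) (π : Set (Set α)) : Prop :=
  (∀ S ∈ π, S.Nonempty) ∧ ⋃₀ π = U ∧
  ∀ S ∈ π, ∀ R ∈ π, S ≠ R → Disjoint S R

/-- `S` is an interval: closed under betweenness. -/
def IsIntervalIn {α : Type*} [Preorder α] (S : Set α) : Prop :=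
  ∀ a ∈ S, ∀ b ∈ S, ∀ x, a ≤ x → x ≤ b → x ∈ S

/-- A strategy depends only on the strict past. -/
def PastDep {T : Type*} [LinearOrder T] {N : Type*} {A : N → Type*} {γ : Type*}
    (σi : T → (T → ∀ j, A j) → γ) : Prop :=
  ∀ t : T, ∀ h g : T → ∀ j, A j, (∀ s, s < t → h s = g s) → σi t h = σi t g

/-- Traceability: from any time `t` and history `h`, there is a completion `g`
agreeing with `h` on the strict past and in the other players' components which is
`t`-consistent with `σi` for `i`. -/
def Traceable {T : Type*} [LinearOrder T] {N : Type*} {A : N → Type*}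
    (i : N) (σi : T → (T → ∀ j, A j) → A i) : Prop :=
  ∀ t : T, ∀ h : T → ∀ j, A j, ∃ g : T → ∀ j, A j,
    (∀ s, s < t → g s = h s) ∧ (∀ j, j ≠ i → ∀ s, g s j = h s j) ∧
    ∀ s, t ≤ s → g s i = σi s g

/-- Well-orderedness: for any `t`-consistent history, the partition of `T_{≥ t}` into
maximal order-connected sets on which player `i`'s action is constant is well-ordered
under the interval order. -/
def WOStrat {T : Type*} [LinearOrder T] {N : Type*} {A : N → Type*}
    (i : N) (σi : T → (T → ∀ j, A j) → A i) : Prop :=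
  ∀ t : T, ∀ h : T → ∀ j, A j, (∀ s, t ≤ s → h s i = σi s h) →
    WOFam (blocks (fun s : ↥(Set.Ici t) => h s.1 i))

/-- Initial uniqueness: two `t`-consistent histories with the same strict past agree
in component `i` on some initial interval `[t, s)` with `s > t`. -/
def InitUnique {T : Type*} [LinearOrder T] {N : Type*} {A : N → Type*}
    (i : N) (σi : T → (T → ∀ j, A j) → A i) : Prop :=
  ∀ t : T, (∃ s, t < s) → ∀ h g : T → ∀ j, A j,
    (∀ s, s < t → h s = g s) →
    (∀ s, t ≤ s → h s i = σi s h) → (∀ s, t ≤ s → g s i = σi s g) →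
    ∃ s, t < s ∧ ∀ r, t ≤ r → r < s → h r i = g r i

/-- Inertiality: in any subgame there is an initial interval on which `σi`
prescribes a constant action after every continuation history. -/
def Inertial {T : Type*} [LinearOrder T] {N : Type*} {A : N → Type*}
    (i : N) (σi : T → (T → ∀ j, A j) → A i) : Prop :=
  ∀ t : T, (∃ s, t < s) → ∀ h : T → ∀ j, A j,
    ∃ s, t < s ∧ ∃ a : A i, ∀ r, t ≤ r → r < s →
      ∀ g : T → ∀ j, A j, (∀ q, q < t → g q = h q) → σi r g = a

/-- Frictionality: there is a default action `z` such that in any consistent history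
player `i` deviates from `z` only finitely often on any interval `[t, s]`. -/
def Frictional {T : Type*} [LinearOrder T] {N : Type*} {A : N → Type*}
    (i : N) (σi : T → (T → ∀ j, A j) → A i) : Prop :=
  ∃ z : A i, ∀ t : T, ∀ h : T → ∀ j, A j, (∀ r, t ≤ r → h r i = σi r h) →
    ∀ s, t < s → Set.Finite {q | t ≤ q ∧ q ≤ s ∧ h q i ≠ z}

/-- `S` is a connected (order topology on `T_{≥ t}`) subset of `T_{≥ t}`. -/
def ConnIn {T : Type*} [LinearOrder T] (t : T) (S : Set T) : Prop :=
  S ⊆ Set.Ici t ∧ OTconn {x : ↥(Set.Ici t) | x.1 ∈ S}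

theorem stmt17 {T : Type*} [ConditionallyCompleteLinearOrderBot T]
    {N : Type*} {A : N → Type*}
    (i : N) (σi : T → (T → ∀ j, A j) → A i) (hpd : PastDep σi)
    (hfr : Frictional i σi) :
    InitUnique i σi := by
  obtain ⟨z, hz⟩ := hfr
  intro t ⟨s₀, hts₀⟩ h g hpast hhc hgc
  have hht : h t i = g t i := by
    rw [hhc t le_rfl, hgc t le_rfl]
    exact hpd t h g hpast
  have hF : Set.Finite {q | t < q ∧ q ≤ s₀ ∧ (h q i ≠ z ∨ g q i ≠ z)} := by
    apply Set.Finite.subset ((hz t h hhc s₀ hts₀).union (hz t g hgc s₀ hts₀))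
    rintro q ⟨h1, h2, h3 | h3⟩
    · exact Or.inl ⟨h1.le, h2, h3⟩
    · exact Or.inr ⟨h1.le, h2, h3⟩
  by_cases hne : {q | t < q ∧ q ≤ s₀ ∧ (h q i ≠ z ∨ g q i ≠ z)}.Nonempty
  · obtain ⟨r₀, hr₀, hmin⟩ := hF.exists_minimalFor id _ hne
    refine ⟨r₀, hr₀.1, fun r htr hrr₀ => ?_⟩
    rcases eq_or_lt_of_le htr with rfl | htr'
    · exact hht
    · by_contra hne'
      have : r ∈ {q | t < q ∧ q ≤ s₀ ∧ (h q i ≠ z ∨ g q i ≠ z)} := by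
        refine ⟨htr', le_of_lt (lt_of_lt_of_le hrr₀ hr₀.2.1), ?_⟩
        by_cases hh : h r i = z
        · by_cases hg : g r i = z
          · exact absurd (hh.trans hg.symm) hne'
          · exact Or.inr hg
        · exact Or.inl hh
      exact absurd (hmin this hrr₀.le) (not_le.mpr hrr₀)
  · refine ⟨s₀, hts₀, fun r htr hrs₀ => ?_⟩
    rcases eq_or_lt_of_le htr with rfl | htr'
    · exact hht
    · by_contra hne'
      apply hne
      refine ⟨r, htr', hrs₀.le, ?_⟩
      by_cases hh : h r i = z
      · by_cases hg : g r i = z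
        · exact absurd (hh.trans hg.symm) hne'
        · exact Or.inr hg
      · exact Or.inl hh
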